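/- Consider the 6×6 payoff matrix A built from two 3-cycles: blocks S₁ = {1,2,3} and S₂ = {4,5,6}, where within each block A has diagonal Ψ(1/2) and cyclic off-diagonal entries Ψ(t₁), Ψ(1−t₁); A_{ij} = Ψ(t₂) for i ∈ S₁, j ∈ S₂; and A_{ij} = Ψ(1−t₂) for i ∈ S₂, j ∈ S₁. If Ψ(t₁) + Ψ(1/2) + Ψ(1−t₁) > 3Ψ(t₂) ≥ 3Ψ(1/2) > 3Ψ(1−t₂), then there exists a Nash equilibrium (μ, μ') of this game where μ assigns strictly positive probability to every index in S₂ (i.e., the Nash solution's support is not contained in S₁). -/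

import Mathlib

open Finset

/-- A probability vector on `Fin n`. -/
def IsProb {n : ℕ} (π : Fin n → ℝ) : Prop := (∀ i, 0 ≤ π i) ∧ ∑ i, π i = 1

/-- Expected payoff of the two-player game with payoff matrix `A`. -/
def payoff {n : ℕ} (A : Fin n → Fin n → ℝ) (π π' : Fin n → ℝ) : ℝ :=
  ∑ i, ∑ j, π i * π' j * A i j

/-- Nash equilibrium of the zero-sum game with payoff matrix `A`. -/
def IsNash {n : ℕ} (A : Fin n → Fin n → ℝ) (π₁ π₂ : Fin n → ℝ) : Prop :=
  IsProb π₁ ∧ IsProb π₂ ∧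
  (∀ π, IsProb π → payoff A π π₂ ≤ payoff A π₁ π₂) ∧
  (∀ π', IsProb π' → payoff A π₁ π₂ ≤ payoff A π₁ π')

section Aux

variable {α : Type*}

lemma vec6_0 (a b c d e f : α) : ![a,b,c,d,e,f] 0 = a := rfl
lemma vec6_1 (a b c d e f : α) : ![a,b,c,d,e,f] 1 = b := rfl
lemma vec6_2 (a b c d e f : α) : ![a,b,c,d,e,f] 2 = c := rfl
lemma vec6_3 (a b c d e f : α) : ![a,b,c,d,e,f] 3 = d := rfl
lemma vec6_4 (a b c d e f : α) : ![a,b,c,d,e,f] 4 = e := rfl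
lemma vec6_5 (a b c d e f : α) : ![a,b,c,d,e,f] 5 = f := rfl

end Aux

lemma nash_aux (c x y p q : ℝ) (h1 : 3 * p < x + c + y) (h2 : c ≤ p) (h3 : q < c) :
    ∃ μ μ' : Fin 6 → ℝ,
      IsNash
        (fun i j => (!![c, x, y, p, p, p;
                        y, c, x, p, p, p;
                        x, y, c, p, p, p;
                        q, q, q, c, x, y;
                        q, q, q, y, c, x;
                        q, q, q, x, y, c] : Matrix (Fin 6) (Fin 6) ℝ) i j) μ μ' ∧
      ∀ i : Fin 6, 3 ≤ (i : ℕ) → 0 < μ i := by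
  set M : Fin 6 → Fin 6 → ℝ :=
    (fun i j => (!![c, x, y, p, p, p;
                        y, c, x, p, p, p;
                        x, y, c, p, p, p;
                        q, q, q, c, x, y;
                        q, q, q, y, c, x;
                        q, q, q, x, y, c] : Matrix (Fin 6) (Fin 6) ℝ) i j) with hM
  have hE : (0:ℝ) < 2 * (x + c + y) - 3 * p - 3 * q := by linarith
  set E : ℝ := 2 * (x + c + y) - 3 * p - 3 * q with hEdef
  have hEne : E ≠ 0 := ne_of_gt hE
  set a : ℝ := (x + c + y - 3 * q) / (3 * E) with ha
  set b : ℝ := (x + c + y - 3 * p) / (3 * E) with hb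
  have ha0 : 0 < a := by rw [ha]; apply div_pos <;> linarith
  have hb0 : 0 < b := by rw [hb]; apply div_pos <;> linarith
  have heq : 3 * b * q + a * (x + c + y) = b * (x + c + y) + 3 * a * p := by
    rw [ha, hb]
    field_simp
    ring
  have hsum1 : a + a + a + b + b + b = 1 := by
    rw [ha, hb, hEdef]
    have hE' : 2 * (x + c + y) - 3 * p - 3 * q ≠ 0 := hEne
    rw [← add_div, ← add_div, ← add_div, ← add_div, ← add_div,
      div_eq_one_iff_eq (mul_ne_zero three_ne_zero hE')]
    ring
  have hμprob : IsProb ![a,a,a,b,b,b] := by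
    constructor
    · intro i
      fin_cases i
      · exact ha0.le
      · exact ha0.le
      · exact ha0.le
      · exact hb0.le
      · exact hb0.le
      · exact hb0.le
    · rw [Fin.sum_univ_six, vec6_0, vec6_1, vec6_2, vec6_3, vec6_4, vec6_5]
      exact hsum1
  have hμ'prob : IsProb ![b,b,b,a,a,a] := by
    constructor
    · intro i
      fin_cases i
      · exact hb0.le
      · exact hb0.le
      · exact hb0.le
      · exact ha0.le
      · exact ha0.le
      · exact ha0.le
    · rw [Fin.sum_univ_six, vec6_0, vec6_1, vec6_2, vec6_3, vec6_4, vec6_5]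
      linarith [hsum1]
  have key1 : ∀ π : Fin 6 → ℝ,
      payoff M π ![b,b,b,a,a,a]
        = (π 0 + π 1 + π 2 + π 3 + π 4 + π 5) * (b * (x + c + y) + 3 * a * p) := by
    intro π
    simp only [payoff, hM, Fin.sum_univ_six, Matrix.of_apply,
      vec6_0, vec6_1, vec6_2, vec6_3, vec6_4, vec6_5]
    linear_combination (π 3 + π 4 + π 5) * heq
  have key2 : ∀ π' : Fin 6 → ℝ,
      payoff M ![a,a,a,b,b,b] π'
        = (π' 0 + π' 1 + π' 2 + π' 3 + π' 4 + π' 5) * (b * (x + c + y) + 3 * a * p) := by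
    intro π'
    simp only [payoff, hM, Fin.sum_univ_six, Matrix.of_apply,
      vec6_0, vec6_1, vec6_2, vec6_3, vec6_4, vec6_5]
    linear_combination (π' 0 + π' 1 + π' 2) * heq
  have sumone : ∀ π : Fin 6 → ℝ, IsProb π → π 0 + π 1 + π 2 + π 3 + π 4 + π 5 = 1 := by
    intro π hπ
    have := hπ.2
    rwa [Fin.sum_univ_six] at this
  refine ⟨![a,a,a,b,b,b], ![b,b,b,a,a,a], ⟨hμprob, hμ'prob, ?_, ?_⟩, ?_⟩
  · intro π hπ
    rw [key1 π, key1 _ , sumone π hπ, sumone _ hμprob]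
  · intro π' hπ'
    rw [key1 _, key2 π', sumone _ hμprob, sumone π' hπ']
  · intro i hi
    fin_cases i
    · exact absurd hi (by norm_num)
    · exact absurd hi (by norm_num)
    · exact absurd hi (by norm_num)
    · exact hb0
    · exact hb0
    · exact hb0

theorem stmt_19 (Ψ : ℝ → ℝ) (t₁ t₂ : ℝ)
    (h1 : 3 * Ψ t₂ < Ψ t₁ + Ψ (1 / 2) + Ψ (1 - t₁))
    (h2 : Ψ (1 / 2) ≤ Ψ t₂)
    (h3 : Ψ (1 - t₂) < Ψ (1 / 2)) :
    ∃ μ μ' : Fin 6 → ℝ,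
      IsNash
        (fun i j => (!![Ψ (1/2), Ψ t₁, Ψ (1-t₁), Ψ t₂, Ψ t₂, Ψ t₂;
                        Ψ (1-t₁), Ψ (1/2), Ψ t₁, Ψ t₂, Ψ t₂, Ψ t₂;
                        Ψ t₁, Ψ (1-t₁), Ψ (1/2), Ψ t₂, Ψ t₂, Ψ t₂;
                        Ψ (1-t₂), Ψ (1-t₂), Ψ (1-t₂), Ψ (1/2), Ψ t₁, Ψ (1-t₁);
                        Ψ (1-t₂), Ψ (1-t₂), Ψ (1-t₂), Ψ (1-t₁), Ψ (1/2), Ψ t₁;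
                        Ψ (1-t₂), Ψ (1-t₂), Ψ (1-t₂), Ψ t₁, Ψ (1-t₁), Ψ (1/2)]
            : Matrix (Fin 6) (Fin 6) ℝ) i j) μ μ' ∧
      ∀ i : Fin 6, 3 ≤ (i : ℕ) → 0 < μ i := by
  exact nash_aux (Ψ (1/2)) (Ψ t₁) (Ψ (1-t₁)) (Ψ t₂) (Ψ (1-t₂)) h1 h2 h3
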